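/- Define F : ℝ³ → ℝ³ by F(x,y,z) = (−x + z(x+yz)², −y − (x+yz)², −z). Then the curve φ : ℝ → ℝ³ given by φ(t) = (18e^t, −12e^{2t}, e^{−t}) satisfies φ'(t) = F(φ(t)) for all t ∈ ℝ, and ‖φ(t)‖ → ∞ as t → ∞. -/

import Mathlib

/-- The vector field of the 3-dimensional polynomial counterexample to the
Markus–Yamabe conjecture. -/
def MYField : ℝ × ℝ × ℝ → ℝ × ℝ × ℝ := fun p =>
  (-p.1 + p.2.2 * (p.1 + p.2.1 * p.2.2) ^ 2,
   -p.2.1 - (p.1 + p.2.1 * p.2.2) ^ 2,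
   -p.2.2)

/-- The explicit unbounded solution `φ(t) = (18 eᵗ, −12 e^{2t}, e^{−t})`. -/
noncomputable def MYSol : ℝ → ℝ × ℝ × ℝ := fun t =>
  (18 * Real.exp t, -12 * Real.exp (2 * t), Real.exp (-t))

theorem stmt_6 :
    (∀ t : ℝ, HasDerivAt MYSol (MYField (MYSol t)) t) ∧
    Filter.Tendsto (fun t => ‖MYSol t‖) Filter.atTop Filter.atTop := by
  constructor
  · intro t
    have h1 : HasDerivAt (fun t : ℝ => 18 * Real.exp t) (18 * Real.exp t) t := by
      simpa using (Real.hasDerivAt_exp t).const_mul 18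
    have h2 : HasDerivAt (fun t : ℝ => -12 * Real.exp (2 * t)) (-24 * Real.exp (2 * t)) t := by
      have := ((Real.hasDerivAt_exp (2 * t)).comp t ((hasDerivAt_id t).const_mul 2)).const_mul
        (-12 : ℝ)
      refine this.congr_deriv ?_
      ring
    have h3 : HasDerivAt (fun t : ℝ => Real.exp (-t)) (-Real.exp (-t)) t := by
      have := (Real.hasDerivAt_exp (-t)).comp t (hasDerivAt_neg t)
      exact this.congr_deriv (by ring)
    have := h1.prodMk (h2.prodMk h3)
    refine this.congr_deriv ?_
    simp only [MYField, MYSol]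
    have hE := Real.exp_ne_zero t
    have h2t : Real.exp (2 * t) = Real.exp t ^ 2 := by
      rw [two_mul, Real.exp_add, sq]
    have hneg : Real.exp (-t) = (Real.exp t)⁻¹ := Real.exp_neg t
    refine Prod.ext ?_ (Prod.ext ?_ ?_) <;> simp [h2t, hneg] <;> field_simp <;> ring
  · have h : Filter.Tendsto (fun t : ℝ => 18 * Real.exp t) Filter.atTop Filter.atTop :=
      Real.tendsto_exp_atTop.const_mul_atTop (by norm_num)
    refine Filter.tendsto_atTop_mono (fun t => ?_) h
    calc 18 * Real.exp t ≤ |18 * Real.exp t| := le_abs_self _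
      _ = ‖(MYSol t).1‖ := by
          simp [MYSol, Real.norm_eq_abs, abs_of_nonneg (by positivity : (0:ℝ) ≤ 18 * Real.exp t)]
      _ ≤ ‖MYSol t‖ := norm_fst_le _
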